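/- Let a, b, c, d be positive integers. The pair (X, Oz) associated to the complex surface V = {(x,y,z) ∈ ℂ³ : y^a = z^b·x^c + x^d} is Kuo–Verdier (w)-regular at the origin if and only if a = 1 or d ≤ c. -/

import Mathlib

open Filter

noncomputable section

/-- x-partial derivative of f(x,y,z) = y^a - z^b*x^c - x^d. -/
def fxC (b c d : ℕ) (x z : ℂ) : ℂ :=
  -(c : ℂ) * z ^ b * x ^ (c - 1) - (d : ℂ) * x ^ (d - 1)

/-- y-partial derivative of f. -/
def fyC (a : ℕ) (y : ℂ) : ℂ := (a : ℂ) * y ^ (a - 1)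

/-- z-partial derivative of f. -/
def fzC (b c : ℕ) (x z : ℂ) : ℂ := -(b : ℂ) * z ^ (b - 1) * x ^ c

/-- Hermitian norm on ℂ³. -/
def nrm3C (u v w : ℂ) : ℝ := Real.sqrt (‖u‖ ^ 2 + ‖v‖ ^ 2 + ‖w‖ ^ 2)

/-- Hermitian norm on ℂ². -/
def nrm2C (u v : ℂ) : ℝ := Real.sqrt (‖u‖ ^ 2 + ‖v‖ ^ 2)

/-- Norm of the gradient ∇f(x,y,z). -/
def gradNormC (a b c d : ℕ) (x y z : ℂ) : ℝ :=
  nrm3C (fxC b c d x z) (fyC a y) (fzC b c x z)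

/-- The gradient ∇f(x,y,z) is nonzero. -/
def gradNeC (a b c d : ℕ) (x y z : ℂ) : Prop :=
  ¬ (fxC b c d x z = 0 ∧ fyC a y = 0 ∧ fzC b c x z = 0)

/-- Membership in X = V \ Oz, where V = {y^a = z^b x^c + x^d} and Oz is the z-axis. -/
def inXC (a b c d : ℕ) (x y z : ℂ) : Prop :=
  y ^ a = z ^ b * x ^ c + x ^ d ∧ ¬ (x = 0 ∧ y = 0)

/-- Whitney (a)-regularity of the pair (X, Oz) at the origin. -/
def aRegC (a b c d : ℕ) : Prop :=
  ∀ x y z : ℕ → ℂ,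
    (∀ n, inXC a b c d (x n) (y n) (z n)) →
    Tendsto (fun n => (x n, y n, z n)) atTop (nhds ((0 : ℂ), (0 : ℂ), (0 : ℂ))) →
    (∀ n, gradNeC a b c d (x n) (y n) (z n)) →
    Tendsto (fun n => ‖fzC b c (x n) (z n)‖ / gradNormC a b c d (x n) (y n) (z n))
      atTop (nhds 0)

/-- The (bᵖⁱ) condition for the retraction π(x,y,z) = (0,0,z). -/
def bpiC (a b c d : ℕ) : Prop :=
  ∀ x y z : ℕ → ℂ,
    (∀ n, inXC a b c d (x n) (y n) (z n)) →
    Tendsto (fun n => (x n, y n, z n)) atTop (nhds ((0 : ℂ), (0 : ℂ), (0 : ℂ))) →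
    (∀ n, gradNeC a b c d (x n) (y n) (z n)) →
    Tendsto (fun n => ‖x n * fxC b c d (x n) (z n) + y n * fyC a (y n)‖ /
        (nrm2C (x n) (y n) * gradNormC a b c d (x n) (y n) (z n)))
      atTop (nhds 0)

/-- Whitney (b)-regularity of the pair (X, Oz) at the origin. -/
def bRegC (a b c d : ℕ) : Prop := aRegC a b c d ∧ bpiC a b c d

/-- Kuo–Verdier (w)-regularity of the pair (X, Oz) at the origin. -/
def wRegC (a b c d : ℕ) : Prop :=
  ∃ C : ℝ, 0 < C ∧ ∃ ε : ℝ, 0 < ε ∧ ∀ x y z : ℂ,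
    inXC a b c d x y z → nrm3C x y z < ε → gradNeC a b c d x y z →
    ‖fzC b c x z‖ ≤ C * nrm2C x y * gradNormC a b c d x y z

/- ### Auxiliary lemmas -/

lemma sqrt3_ge_fst (A B C : ℝ) (hA : 0 ≤ A) : A ≤ Real.sqrt (A^2+B^2+C^2) := by
  calc A = Real.sqrt (A^2) := (Real.sqrt_sq hA).symm
  _ ≤ _ := Real.sqrt_le_sqrt (by nlinarith [sq_nonneg B, sq_nonneg C])

lemma sqrt3_ge_snd (A B C : ℝ) (hB : 0 ≤ B) : B ≤ Real.sqrt (A^2+B^2+C^2) := by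
  calc B = Real.sqrt (B^2) := (Real.sqrt_sq hB).symm
  _ ≤ _ := Real.sqrt_le_sqrt (by nlinarith [sq_nonneg A, sq_nonneg C])

lemma sqrt2_ge_fst (A B : ℝ) (hA : 0 ≤ A) : A ≤ Real.sqrt (A^2+B^2) := by
  calc A = Real.sqrt (A^2) := (Real.sqrt_sq hA).symm
  _ ≤ _ := Real.sqrt_le_sqrt (by nlinarith [sq_nonneg B])

lemma sqrt3_le_add (A B C : ℝ) (hA : 0 ≤ A) (hB : 0 ≤ B) (hC : 0 ≤ C) :
    Real.sqrt (A^2+B^2+C^2) ≤ A+B+C := by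
  calc Real.sqrt (A^2+B^2+C^2) ≤ Real.sqrt ((A+B+C)^2) :=
    Real.sqrt_le_sqrt (by nlinarith)
  _ = A+B+C := Real.sqrt_sq (by positivity)

lemma norm_fzC (b c : ℕ) (x z : ℂ) : ‖fzC b c x z‖ = b * ‖z‖^(b-1) * ‖x‖^c := by
  simp [fzC, norm_mul, norm_pow]

lemma norm_x_le_nrm3 (x y z : ℂ) : ‖x‖ ≤ nrm3C x y z := sqrt3_ge_fst _ _ _ (norm_nonneg x)

lemma norm_z_le_nrm3 (x y z : ℂ) : ‖z‖ ≤ nrm3C x y z := by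
  calc ‖z‖ = Real.sqrt (‖z‖^2) := (Real.sqrt_sq (norm_nonneg z)).symm
  _ ≤ _ := Real.sqrt_le_sqrt (by nlinarith [sq_nonneg ‖x‖, sq_nonneg ‖y‖])

lemma norm_x_le_nrm2 (x y : ℂ) : ‖x‖ ≤ nrm2C x y := sqrt2_ge_fst _ _ (norm_nonneg x)

lemma nrm2_nonneg (x y : ℂ) : 0 ≤ nrm2C x y := Real.sqrt_nonneg _

lemma fx_le_gradNorm (a b c d : ℕ) (x y z : ℂ) :
    ‖fxC b c d x z‖ ≤ gradNormC a b c d x y z :=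
  sqrt3_ge_fst _ _ _ (norm_nonneg _)

lemma fy_le_gradNorm (a b c d : ℕ) (x y z : ℂ) :
    ‖fyC a y‖ ≤ gradNormC a b c d x y z :=
  sqrt3_ge_snd _ _ _ (norm_nonneg _)

lemma gradNorm_nonneg (a b c d : ℕ) (x y z : ℂ) : 0 ≤ gradNormC a b c d x y z :=
  Real.sqrt_nonneg _

/- ### Sufficiency: a = 1 -/

lemma wReg_of_a_eq_one (b c d : ℕ) (hb : 0 < b) (hc : 0 < c) :
    wRegC 1 b c d := by
  have hb' : (0:ℝ) < b := by exact_mod_cast hb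
  refine ⟨b, hb', 1, one_pos, ?_⟩
  intro x y z _ hnrm _
  have hx1 : ‖x‖ < 1 := lt_of_le_of_lt (norm_x_le_nrm3 x y z) hnrm
  have hz1 : ‖z‖ < 1 := lt_of_le_of_lt (norm_z_le_nrm3 x y z) hnrm
  have hG1 : (1:ℝ) ≤ gradNormC 1 b c d x y z := by
    have := fy_le_gradNorm 1 b c d x y z
    simpa [fyC] using this
  have hxn : 0 ≤ ‖x‖ := norm_nonneg x
  have hfz : ‖fzC b c x z‖ ≤ (b:ℝ) * ‖x‖ := by
    rw [norm_fzC]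
    have h1 : ‖z‖^(b-1) ≤ 1 := pow_le_one₀ (norm_nonneg z) hz1.le
    have h2 : ‖x‖^c ≤ ‖x‖^1 :=
      pow_le_pow_of_le_one hxn hx1.le hc
    calc (b:ℝ) * ‖z‖^(b-1) * ‖x‖^c ≤ (b:ℝ) * 1 * ‖x‖^1 := by
          apply mul_le_mul (mul_le_mul_of_nonneg_left h1 hb'.le) h2 (by positivity)
            (by positivity)
    _ = (b:ℝ) * ‖x‖ := by ring
  have hN : ‖x‖ ≤ nrm2C x y := norm_x_le_nrm2 x y
  have hN0 : 0 ≤ nrm2C x y := nrm2_nonneg x y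
  calc ‖fzC b c x z‖ ≤ (b:ℝ) * ‖x‖ := hfz
  _ ≤ (b:ℝ) * nrm2C x y := by nlinarith
  _ = (b:ℝ) * nrm2C x y * 1 := by ring
  _ ≤ (b:ℝ) * nrm2C x y * gradNormC 1 b c d x y z := by
      apply mul_le_mul_of_nonneg_left hG1 (by positivity)

/- ### Sufficiency: d ≤ c -/

lemma wReg_of_d_le_c (a b c d : ℕ) (hb : 0 < b) (hd : 0 < d) (hdc : d ≤ c) :
    wRegC a b c d := by
  have hb' : (0:ℝ) < b := by exact_mod_cast hb
  have hd' : (0:ℝ) < d := by exact_mod_cast hd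
  have hc' : (0:ℝ) < c := by exact_mod_cast lt_of_lt_of_le hd hdc
  refine ⟨2*b/d, by positivity, min 1 (d/(2*c)), ?_, ?_⟩
  · apply lt_min one_pos (by positivity)
  intro x y z _ hnrm _
  have hx1 : ‖x‖ < 1 := lt_of_le_of_lt (norm_x_le_nrm3 x y z) (lt_of_lt_of_le hnrm (min_le_left _ _))
  have hz1 : ‖z‖ < 1 := lt_of_le_of_lt (norm_z_le_nrm3 x y z) (lt_of_lt_of_le hnrm (min_le_left _ _))
  have hz2 : ‖z‖ < d/(2*c) := lt_of_le_of_lt (norm_z_le_nrm3 x y z) (lt_of_lt_of_le hnrm (min_le_right _ _))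
  have hxn : 0 ≤ ‖x‖ := norm_nonneg x
  -- lower bound for ‖fx‖
  have hsplit : x ^ (c-1) = x ^ (c-d) * x ^ (d-1) := by
    rw [← pow_add]
    congr 1
    omega
  have hfxform : fxC b c d x z = (-(c:ℂ) * z^b * x^(c-d) - (d:ℂ)) * x^(d-1) := by
    rw [fxC, hsplit]; ring
  have hnormsmall : (c:ℝ) * (‖z‖^b * ‖x‖^(c-d)) ≤ d/2 := by
    have h1 : ‖z‖^b ≤ ‖z‖^1 := pow_le_pow_of_le_one (norm_nonneg z) hz1.le hb
    have h2 : ‖x‖^(c-d) ≤ 1 := pow_le_one₀ hxn hx1.le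
    have h3 : ‖z‖^b * ‖x‖^(c-d) ≤ ‖z‖ := by
      calc ‖z‖^b * ‖x‖^(c-d) ≤ ‖z‖^1 * 1 :=
        mul_le_mul h1 h2 (by positivity) (by positivity)
      _ = ‖z‖ := by ring
    calc (c:ℝ) * (‖z‖^b * ‖x‖^(c-d)) ≤ (c:ℝ) * (d/(2*c)) := by nlinarith
    _ = d/2 := by field_simp
  have hfxlow : (d:ℝ)/2 * ‖x‖^(d-1) ≤ ‖fxC b c d x z‖ := by
    rw [hfxform, norm_mul, norm_pow]
    have h1 : ‖-(c:ℂ) * z^b * x^(c-d) - (d:ℂ)‖ ≥ (d:ℝ)/2 := by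
      have h2 : ‖(d:ℂ)‖ - ‖-(c:ℂ) * z^b * x^(c-d)‖ ≤ ‖-(c:ℂ) * z^b * x^(c-d) - (d:ℂ)‖ := by
        rw [norm_sub_rev]
        exact norm_sub_norm_le _ _
      have h3 : ‖-(c:ℂ) * z^b * x^(c-d)‖ = (c:ℝ) * (‖z‖^b * ‖x‖^(c-d)) := by
        simp [norm_mul, norm_pow]; ring
      have h4 : ‖(d:ℂ)‖ = (d:ℝ) := by simp
      rw [h3, h4] at h2
      linarith [hnormsmall]
    have h5 : (0:ℝ) ≤ ‖x‖^(d-1) := by positivity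
    nlinarith
  -- upper bound for ‖fz‖
  have hxc : ‖x‖^c = ‖x‖^(c-d) * ‖x‖^(d-1) * ‖x‖ := by
    rw [← pow_add, ← pow_succ]
    congr 1
    omega
  have hG : ‖fxC b c d x z‖ ≤ gradNormC a b c d x y z := fx_le_gradNorm a b c d x y z
  have hG0 : 0 ≤ gradNormC a b c d x y z := gradNorm_nonneg a b c d x y z
  have hN : ‖x‖ ≤ nrm2C x y := norm_x_le_nrm2 x y
  have hN0 : 0 ≤ nrm2C x y := nrm2_nonneg x y
  have ht : ‖x‖^(d-1) ≤ 2/d * gradNormC a b c d x y z := by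
    have : (d:ℝ)/2 * ‖x‖^(d-1) ≤ gradNormC a b c d x y z := le_trans hfxlow hG
    have h2 : ‖x‖^(d-1) = 2/d*((d:ℝ)/2*‖x‖^(d-1)) := by field_simp
    rw [h2]
    apply mul_le_mul_of_nonneg_left this (by positivity)
  calc ‖fzC b c x z‖ = (b:ℝ) * ‖z‖^(b-1) * (‖x‖^(c-d) * ‖x‖^(d-1) * ‖x‖) := by
        rw [norm_fzC, hxc]
  _ ≤ (b:ℝ) * 1 * (1 * (2/d * gradNormC a b c d x y z) * nrm2C x y) := by
      apply mul_le_mul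
      · apply mul_le_mul_of_nonneg_left (pow_le_one₀ (norm_nonneg z) hz1.le) hb'.le
      · apply mul_le_mul
        · apply mul_le_mul (pow_le_one₀ hxn hx1.le) ht (by positivity) one_pos.le
        · exact hN
        · exact hxn
        · positivity
      · positivity
      · positivity
  _ = 2*(b:ℝ)/d * nrm2C x y * gradNormC a b c d x y z := by ring

/- ### Necessity: if a ≥ 2 and c < d, then (w) fails -/

set_option maxHeartbeats 1000000 in
lemma not_wReg (a' b' c' k' : ℕ) :
    ¬ wRegC (a'+2) (b'+1) (c'+1) (c'+k'+2) := by
  rintro ⟨C, hC, ε, hε, hreg⟩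
  set B : ℝ := (b':ℝ)+1 with hB_def
  set D : ℝ := (c':ℝ)+(k':ℝ)+2 with hD_def
  set K : ℝ := (k':ℝ)+1 with hK_def
  have hb0 : (0:ℝ) ≤ (b':ℝ) := Nat.cast_nonneg b'
  have hc0 : (0:ℝ) ≤ (c':ℝ) := Nat.cast_nonneg c'
  have hk0 : (0:ℝ) ≤ (k':ℝ) := Nat.cast_nonneg k'
  have hB1 : (1:ℝ) ≤ B := by rw [hB_def]; linarith
  have hD0 : (0:ℝ) < D := by rw [hD_def]; linarith
  have hK0 : (0:ℝ) < K := by rw [hK_def]; linarith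
  have hKD : K ≤ D := by rw [hK_def, hD_def]; linarith
  set s : ℝ := min (min (1/2) (ε/4)) (B/(2*C*(D+B))) with hs_def
  have hs0 : 0 < s := by
    apply lt_min (lt_min (by norm_num) (by positivity))
    positivity
  have hs1 : s ≤ 1/2 := le_trans (min_le_left _ _) (min_le_left _ _)
  have hs2 : s ≤ ε/4 := le_trans (min_le_left _ _) (min_le_right _ _)
  have hs3 : s ≤ B/(2*C*(D+B)) := min_le_right _ _
  set t : ℂ := (s:ℂ) with ht_def
  have htne : t ≠ 0 := by
    rw [ht_def]
    exact_mod_cast hs0.ne'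
  set ζ : ℂ := Complex.exp (↑(Real.pi/(b'+1:ℕ)) * Complex.I) with hζ_def
  have hζn : ‖ζ‖ = 1 := by
    rw [hζ_def]
    exact Complex.norm_exp_ofReal_mul_I _
  have hζb : ζ^(b'+1) = -1 := by
    rw [hζ_def, ← Complex.exp_nat_mul]
    rw [show ((b'+1:ℕ):ℂ) * (↑(Real.pi/(b'+1:ℕ)) * Complex.I) = ↑Real.pi * Complex.I by
      have hne : ((b':ℂ)+1) ≠ 0 := by
        have : ((b'+1:ℕ):ℂ) ≠ 0 := Nat.cast_ne_zero.mpr (Nat.succ_ne_zero b')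
        push_cast at this
        exact this
      push_cast
      field_simp]
    exact Complex.exp_pi_mul_I
  set x : ℂ := t^(b'+1) with hx_def
  set z : ℂ := t^(k'+1) * ζ with hz_def
  have hzb : z^(b'+1) = -(t^((k'+1)*(b'+1))) := by
    rw [hz_def, mul_pow, ← pow_mul, hζb]
    ring
  -- membership in X
  have hinX : inXC (a'+2) (b'+1) (c'+1) (c'+k'+2) x 0 z := by
    constructor
    · rw [hx_def, hzb, zero_pow (Nat.succ_ne_zero _)]
      rw [← pow_mul, ← pow_mul]
      rw [show (b'+1)*(c'+k'+2) = (k'+1)*(b'+1) + (b'+1)*(c'+1) by ring, pow_add]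
      ring
    · rintro ⟨hx0, -⟩
      exact (pow_ne_zero _ htne) (hx_def ▸ hx0)
  -- value of fx
  have hfx : fxC (b'+1) (c'+1) (c'+k'+2) x z = -(((k'+1:ℕ)):ℂ) * t^((b'+1)*(c'+k'+1)) := by
    rw [fxC, hzb, hx_def]
    rw [show (c'+1)-1 = c' from rfl, show (c'+k'+2)-1 = c'+k'+1 from rfl]
    rw [← pow_mul, ← pow_mul]
    rw [show (b'+1)*(c'+k'+1) = (k'+1)*(b'+1) + (b'+1)*c' by ring, pow_add]
    push_cast
    ring
  have hfxne : fxC (b'+1) (c'+1) (c'+k'+2) x z ≠ 0 := by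
    rw [hfx]
    exact mul_ne_zero (neg_ne_zero.mpr (Nat.cast_ne_zero.mpr (Nat.succ_ne_zero k')))
      (pow_ne_zero _ htne)
  have hgradne : gradNeC (a'+2) (b'+1) (c'+1) (c'+k'+2) x 0 z := fun h => hfxne h.1
  -- norms
  have hnt : ‖t‖ = s := by rw [ht_def, Complex.norm_real, Real.norm_eq_abs, abs_of_pos hs0]
  have hnx : ‖x‖ = s^(b'+1) := by rw [hx_def, norm_pow, hnt]
  have hnz : ‖z‖ = s^(k'+1) := by rw [hz_def, norm_mul, norm_pow, hnt, hζn, mul_one]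
  have hnfx : ‖fxC (b'+1) (c'+1) (c'+k'+2) x z‖ = K * s^((b'+1)*(c'+k'+1)) := by
    rw [hfx, norm_mul, norm_neg, norm_pow, hnt, Complex.norm_natCast]
    rw [hK_def]
    push_cast
    ring
  have hfy0 : fyC (a'+2) (0:ℂ) = 0 := by
    rw [fyC, show (a'+2)-1 = a'+1 from rfl, zero_pow (Nat.succ_ne_zero _), mul_zero]
  have hnfz : ‖fzC (b'+1) (c'+1) x z‖ = B * s^((k'+1)*b' + (b'+1)*(c'+1)) := by
    rw [norm_fzC, hnz, hnx, show (b'+1)-1 = b' from rfl]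
    rw [← pow_mul, ← pow_mul, pow_add, hB_def]
    push_cast
    ring
  have hnrm2 : nrm2C x 0 = s^(b'+1) := by
    rw [nrm2C, hnx, norm_zero]
    rw [show (s^(b'+1))^2 + (0:ℝ)^2 = (s^(b'+1))^2 by ring]
    exact Real.sqrt_sq (by positivity)
  -- bounds on powers of s
  have hsle1 : s ≤ 1 := by linarith
  have hspow : ∀ n : ℕ, s^(n+1) ≤ s := fun n => by
    calc s^(n+1) ≤ s^1 := pow_le_pow_of_le_one hs0.le hsle1 (Nat.succ_le_succ (Nat.zero_le n))
    _ = s := pow_one s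
  -- the point is within ε
  have hnrm3 : nrm3C x 0 z < ε := by
    have h1 : nrm3C x 0 z ≤ ‖x‖ + ‖(0:ℂ)‖ + ‖z‖ :=
      sqrt3_le_add _ _ _ (norm_nonneg _) (norm_nonneg _) (norm_nonneg _)
    rw [hnx, hnz, norm_zero] at h1
    have h2 : s^(b'+1) ≤ s := hspow b'
    have h3 : s^(k'+1) ≤ s := hspow k'
    linarith
  -- apply (w)-regularity
  have hineq := hreg x 0 z hinX hnrm3 hgradne
  rw [hnfz, hnrm2] at hineq
  -- bound the gradient norm
  have hgradle : gradNormC (a'+2) (b'+1) (c'+1) (c'+k'+2) x 0 z ≤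
      K * s^((b'+1)*(c'+k'+1)) + B * s^((k'+1)*b' + (b'+1)*(c'+1)) := by
    have h1 : gradNormC (a'+2) (b'+1) (c'+1) (c'+k'+2) x 0 z ≤
        ‖fxC (b'+1) (c'+1) (c'+k'+2) x z‖ + ‖fyC (a'+2) (0:ℂ)‖ + ‖fzC (b'+1) (c'+1) x z‖ :=
      sqrt3_le_add _ _ _ (norm_nonneg _) (norm_nonneg _) (norm_nonneg _)
    rw [hnfx, hnfz, hfy0, norm_zero] at h1
    linarith
  clear_value B D K s t ζ x z
  have hineq2 : B * s^((k'+1)*b' + (b'+1)*(c'+1)) ≤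
      C * s^(b'+1) * (K * s^((b'+1)*(c'+k'+1)) + B * s^((k'+1)*b' + (b'+1)*(c'+1))) := by
    calc B * s^((k'+1)*b' + (b'+1)*(c'+1)) ≤
        C * s^(b'+1) * gradNormC (a'+2) (b'+1) (c'+1) (c'+k'+2) x 0 z := hineq
    _ ≤ _ := by
        apply mul_le_mul_of_nonneg_left hgradle
          (mul_nonneg hC.le (pow_nonneg hs0.le _))
  -- factor out s^E
  have hfactor : C * s^(b'+1) * (K * s^((b'+1)*(c'+k'+1)) + B * s^((k'+1)*b' + (b'+1)*(c'+1)))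
      = (C * (K * s^(k'+1) + B * s^(b'+1))) * s^((k'+1)*b' + (b'+1)*(c'+1)) := by
    ring
  rw [hfactor] at hineq2
  have hsE : (0:ℝ) < s^((k'+1)*b' + (b'+1)*(c'+1)) := pow_pos hs0 _
  have hkey : B ≤ C * (K * s^(k'+1) + B * s^(b'+1)) :=
    le_of_mul_le_mul_right (by linarith [hineq2]) hsE
  have h6 : C * (K * s^(k'+1) + B * s^(b'+1)) ≤ C * ((D+B) * s) := by
    have h7 : K * s^(k'+1) ≤ D * s := by
      calc K * s^(k'+1) ≤ K * s := by nlinarith [hspow k']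
      _ ≤ D * s := by nlinarith
    have h8 : B * s^(b'+1) ≤ B * s := by nlinarith [hspow b']
    nlinarith
  have hDB : (0:ℝ) < D + B := by linarith
  have h9 : C * ((D+B) * s) ≤ B/2 := by
    have h10 : C * ((D+B) * s) ≤ C * ((D+B) * (B/(2*C*(D+B)))) :=
      mul_le_mul_of_nonneg_left (mul_le_mul_of_nonneg_left hs3 hDB.le) hC.le
    have h11 : C * ((D+B) * (B/(2*C*(D+B)))) = B/2 := by
      field_simp
    linarith
  linarith


/-- Kuo–Verdier (w)-regularity classification for y^a = z^b x^c + x^d in ℂ³ (Diagram 5). -/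
theorem kuo_verdier_w_complex (a b c d : ℕ) (ha : 0 < a) (hb : 0 < b) (hc : 0 < c) (hd : 0 < d) :
    wRegC a b c d ↔ a = 1 ∨ d ≤ c := by
  constructor
  · intro hw
    by_contra hcon
    push_neg at hcon
    obtain ⟨ha1, hcd⟩ := hcon
    obtain ⟨a', rfl⟩ : ∃ a', a = a'+2 := ⟨a-2, by omega⟩
    obtain ⟨b', rfl⟩ : ∃ b', b = b'+1 := ⟨b-1, by omega⟩
    obtain ⟨c', rfl⟩ : ∃ c', c = c'+1 := ⟨c-1, by omega⟩
    obtain ⟨k', rfl⟩ : ∃ k', d = c'+k'+2 := ⟨d-c'-2, by omega⟩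
    exact not_wReg a' b' c' k' hw
  · rintro (rfl | hdc)
    · exact wReg_of_a_eq_one b c d hb hc
    · exact wReg_of_d_le_c a b c d hb hd hdc
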